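/- Let D = (0,1) and consider the deterministic motion X(t) = X(0) − t killed upon reaching 0, so the lifetime is ζ = X(0). For the Fleming–Viot system of two particles (x, y) ∈ (0,1)² driven by this motion — where at each time one particle reaches 0 it jumps to the position of the other particle — the extinction time satisfies τ_∞ = max{x, y}. In particular, extinction always occurs in finite time. -/
import Mathlib


open Filter

theorem stmt19 (x y : ℝ) (hx : x ∈ Set.Ioo (0 : ℝ) 1) (hy : y ∈ Set.Ioo (0 : ℝ) 1)
    (s : ℕ → ℝ × ℝ) (hs0 : s 0 = (x, y))
    (hs : ∀ n : ℕ, s (n + 1) = (|(s n).2 - (s n).1|, |(s n).2 - (s n).1|))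
    (σ : ℕ → ℝ) (hσ : ∀ n : ℕ, σ n = min (s n).1 (s n).2)
    (τ : ℕ → ℝ) (hτ : ∀ n : ℕ, τ n = ∑ i ∈ Finset.range n, σ i) :
    Tendsto τ atTop (nhds (max x y)) := by
  have h1 : s 1 = (|y - x|, |y - x|) := by rw [hs 0, hs0]
  have h2 : ∀ n, s (n + 2) = (0, 0) := by
    intro n
    induction n with
    | zero => rw [hs 1, h1]; simp
    | succ k ih => rw [hs (k + 2), ih]; simp
  have hσ2 : ∀ n, σ (n + 2) = 0 := by
    intro n; rw [hσ, h2]; simp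
  have hτ2 : τ 2 = max x y := by
    rw [hτ]
    rw [Finset.sum_range_succ, Finset.sum_range_one, hσ 0, hσ 1, hs0, h1]
    have : |y - x| = max x y - min x y := by
      rw [max_sub_min_eq_abs, abs_sub_comm]
    simp only [min_self]
    rw [this]; ring
  have heq : ∀ n, τ (n + 2) = max x y := by
    intro n
    induction n with
    | zero => exact hτ2
    | succ k ih =>
        have : τ (k + 3) = τ (k + 2) + σ (k + 2) := by
          rw [hτ, hτ, Finset.sum_range_succ]
        rw [this, ih, hσ2 k, add_zero]
  have : Tendsto (fun _ : ℕ => max x y) atTop (nhds (max x y)) := tendsto_const_nhds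
  refine this.congr' ?_
  filter_upwards [eventually_ge_atTop 2] with n hn
  obtain ⟨m, rfl⟩ := Nat.exists_eq_add_of_le hn
  rw [add_comm] at *
  exact (heq m).symm
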